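/- Let a, c be positive integers with a² > c > 1, a divides c - 1, 2^(c-1) ≡ 1 (mod c), and for every prime p dividing a we have gcd(2^((c-1)/p) - 1, c) = 1. Then c is prime. -/

import Mathlib

set_option maxHeartbeats 1000000 in

/-- Pocklington-style primality criterion. -/
theorem pocklington_style (a c : ℕ) (hac : a ^ 2 > c) (hc : 1 < c)
    (hdvd : a ∣ c - 1) (hpow : 2 ^ (c - 1) ≡ 1 [MOD c])
    (hgcd : ∀ p : ℕ, p.Prime → p ∣ a → Nat.gcd (2 ^ ((c - 1) / p) - 1) c = 1) :
    c.Prime := by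
  by_contra hnp
  set q := c.minFac with hq
  have hq2 : q ^ 2 ≤ c := Nat.minFac_sq_le_self (by omega) hnp
  have hqp : q.Prime := Nat.minFac_prime (by omega)
  have hqc : q ∣ c := Nat.minFac_dvd c
  have hc1 : 0 < c - 1 := by omega
  -- c ∣ 2^(c-1) - 1
  have hcd : c ∣ 2 ^ (c - 1) - 1 :=
    (Nat.modEq_iff_dvd' (Nat.one_le_two_pow)).mp hpow.symm
  have hqd : q ∣ 2 ^ (c - 1) - 1 := hqc.trans hcd
  -- q is odd
  have hqodd : q ≠ 2 := by
    intro h2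
    rw [h2] at hqd
    have h1 : 2 ∣ 2 ^ (c - 1) := dvd_pow_self 2 (by omega)
    have h3 : 2 ≤ 2 ^ (c - 1) := Nat.one_lt_two_pow (by omega)
    omega
  haveI : Fact q.Prime := ⟨hqp⟩
  have h2ne : (2 : ZMod q) ≠ 0 := by
    intro h
    rw [show (2 : ZMod q) = ((2 : ℕ) : ZMod q) by push_cast; ring,
      ZMod.natCast_eq_zero_iff] at h
    exact hqodd ((Nat.prime_dvd_prime_iff_eq hqp Nat.prime_two).mp h).symm.symm
  -- 2^(c-1) = 1 in ZMod q
  have key : ∀ m : ℕ, q ∣ 2 ^ m - 1 → (2 : ZMod q) ^ m = 1 := by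
    intro m hm
    have h1 : (1 : ℕ) ≤ 2 ^ m := Nat.one_le_two_pow
    have := (ZMod.natCast_eq_zero_iff _ q).mpr hm
    push_cast [h1] at this
    linear_combination this
  have hpow1 : (2 : ZMod q) ^ (c - 1) = 1 := key _ hqd
  set d := orderOf (2 : ZMod q) with hd
  have hdc : d ∣ c - 1 := orderOf_dvd_of_pow_eq_one hpow1
  have hdq : d ∣ q - 1 := ZMod.orderOf_dvd_card_sub_one h2ne
  have hfin : IsOfFinOrder (2 : ZMod q) := isOfFinOrder_iff_pow_eq_one.mpr ⟨c - 1, hc1, hpow1⟩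
  have hd0 : d ≠ 0 := hfin.orderOf_pos.ne'
  -- for prime p ∣ a, d ∤ (c-1)/p
  have hnd : ∀ p : ℕ, p.Prime → p ∣ a → ¬ d ∣ (c - 1) / p := by
    intro p pp pa hdvd'
    have : (2 : ZMod q) ^ ((c - 1) / p) = 1 := by
      obtain ⟨k, hk⟩ := hdvd'
      rw [hk, pow_mul, hd, pow_orderOf_eq_one, one_pow]
    have hq1 : q ∣ 2 ^ ((c - 1) / p) - 1 := by
      have h1 : (1 : ℕ) ≤ 2 ^ ((c - 1) / p) := Nat.one_le_two_pow
      rw [← ZMod.natCast_eq_zero_iff]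
      push_cast [h1]
      linear_combination this
    have := Nat.dvd_gcd hq1 hqc
    rw [hgcd p pp pa] at this
    exact hqp.one_lt.ne' (Nat.eq_one_of_dvd_one this ▸ rfl)
  -- a ∣ d
  have had : a ∣ d := by
    have ha0 : a ≠ 0 := by rintro rfl; simp at hac
    rw [← Nat.factorization_le_iff_dvd ha0 hd0]
    intro p
    rcases Nat.eq_zero_or_pos (a.factorization p) with h0 | hpos
    · simp [h0]
    have pp : p.Prime := Nat.prime_of_mem_primeFactors
      ((Nat.support_factorization a) ▸ Finsupp.mem_support_iff.mpr hpos.ne')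
    have pa : p ∣ a := Nat.dvd_of_factorization_pos hpos.ne'
    have hle : a.factorization p ≤ (c - 1).factorization p :=
      (Nat.factorization_le_iff_dvd ha0 hc1.ne').mpr hdvd p
    have hdfac : d.factorization p ≥ (c - 1).factorization p := by
      by_contra hlt
      push_neg at hlt
      apply hnd p pp pa
      have hpc : p ∣ c - 1 := pa.trans hdvd
      rw [← Nat.factorization_le_iff_dvd hd0 (by
        have := Nat.div_pos (Nat.le_of_dvd hc1 hpc) pp.pos
        omega)]
      intro r
      rw [Nat.factorization_div hpc]
      have hdcf := (Nat.factorization_le_iff_dvd hd0 hc1.ne').mpr hdc r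
      rcases eq_or_ne p r with rfl | hrp
      · simp only [Finsupp.tsub_apply, pp.factorization, Finsupp.single_eq_same]
        omega
      · simp only [Finsupp.tsub_apply, pp.factorization, Finsupp.single_eq_of_ne' hrp]
        omega
    omega
  -- a ≤ q - 1
  have hq1pos : 0 < q - 1 := by have := hqp.two_le; omega
  have had' : a ∣ q - 1 := had.trans hdq
  have : a ≤ q - 1 := Nat.le_of_dvd hq1pos had'
  have h5 : a ^ 2 < q ^ 2 := Nat.pow_lt_pow_left (by omega) (by norm_num)
  omega
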